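/- If φ is a homogeneous quasimorphism on a group G with defect D(φ), then for every g ∈ [G,G], scl(g) ≥ φ(g)/(2 D(φ)). In particular, if D(φ) = 1 then scl(g) ≥ φ(g)/2. -/

import Mathlib

open scoped commutatorElement

/-- Commutator length. -/
noncomputable def cl {G : Type*} [Group G] (g : G) : ℕ :=
  sInf {k : ℕ | ∃ f h : Fin k → G, g = (List.ofFn (fun i => ⁅f i, h i⁆)).prod}

/-- Stable commutator length, `scl g = lim cl(gⁿ)/n` (encoded as a limsup; the
limit exists by Fekete's lemma for `g ∈ [G,G]`). -/
noncomputable def scl {G : Type*} [Group G] (g : G) : ℝ :=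
  Filter.atTop.limsup (fun n : ℕ => (cl (g ^ n) : ℝ) / n)

/-- The defect of a quasimorphism. -/
noncomputable def defect {G : Type*} [Group G] (φ : G → ℝ) : ℝ :=
  sSup {x : ℝ | ∃ a b : G, x = |φ (a * b) - φ a - φ b|}

open Filter

section Aux

variable {G : Type*} [Group G] (φ : G → ℝ)

/-- The set in the definition of `cl`, rephrased with lists. -/
lemma cl_set_eq (g : G) :
    {k : ℕ | ∃ f h : Fin k → G, g = (List.ofFn (fun i => ⁅f i, h i⁆)).prod} =
    {k : ℕ | ∃ l : List (G × G), l.length = k ∧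
      g = (l.map fun p => ⁅p.1, p.2⁆).prod} := by
  ext k
  constructor
  · rintro ⟨f, h, rfl⟩
    refine ⟨List.ofFn (fun i => (f i, h i)), by simp, ?_⟩
    rw [List.map_ofFn]
    rfl
  · rintro ⟨l, rfl, rfl⟩
    refine ⟨fun i => (l.get i).1, fun i => (l.get i).2, ?_⟩
    have : l.map (fun p => ⁅p.1, p.2⁆) = (List.ofFn l.get).map (fun p => ⁅p.1, p.2⁆) := by
      rw [List.ofFn_get]
    rw [this, List.map_ofFn]
    rfl

lemma inv_rep (l : List (G × G)) :
    (l.map fun p => ⁅p.1, p.2⁆).prod⁻¹ =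
      ((l.reverse.map fun p => (p.2, p.1)).map fun p => ⁅p.1, p.2⁆).prod := by
  induction l with
  | nil => simp
  | cons p l ih =>
    simp only [List.map_cons, List.prod_cons, mul_inv_rev, List.reverse_cons,
      List.map_append, List.prod_append, ih, List.map_cons, List.map_nil,
      List.prod_cons, List.prod_nil, mul_one]
    rw [commutatorElement_inv]

end Aux

theorem bavard_easy_direction {G : Type*} [Group G] (φ : G → ℝ)
    (hqm : BddAbove {x : ℝ | ∃ a b : G, x = |φ (a * b) - φ a - φ b|})
    (hhom : ∀ (g : G) (n : ℤ), φ (g ^ n) = (n : ℝ) * φ g)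
    (g : G) (hg : g ∈ commutator G) :
    φ g / (2 * defect φ) ≤ scl g := by
  set D := defect φ with hD
  -- basic facts
  have hφ1 : φ 1 = 0 := by
    have := hhom 1 0; simpa using this
  have hqd : ∀ a b : G, |φ (a * b) - φ a - φ b| ≤ D :=
    fun a b => le_csSup hqm ⟨a, b, rfl⟩
  have hD0 : 0 ≤ D := by
    have := hqd 1 1; simp [hφ1] at this; linarith [abs_nonneg (φ (1 * 1) - φ 1 - φ 1), hqd 1 1]
  have hinv : ∀ a : G, φ a⁻¹ = -φ a := by
    intro a
    have := hhom a (-1); simpa using this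
  have hnat : ∀ (a : G) (n : ℕ), φ (a ^ n) = (n : ℝ) * φ a := by
    intro a n
    have := hhom a n
    simpa using this
  -- conjugation invariance
  have hconj : ∀ a b : G, φ (a * b * a⁻¹) = φ b := by
    intro a b
    have key : ∀ n : ℕ, (n : ℝ) * |φ (a * b * a⁻¹) - φ b| ≤ 2 * D := by
      intro n
      have h1 : (a * b * a⁻¹) ^ n = a * b ^ n * a⁻¹ := by
        rw [conj_pow]
      have h2 : |φ (a * (b ^ n * a⁻¹)) - φ a - φ (b ^ n * a⁻¹)| ≤ D := hqd _ _
      have h3 : |φ (b ^ n * a⁻¹) - φ (b ^ n) - φ a⁻¹| ≤ D := hqd _ _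
      have h4 : φ ((a * b * a⁻¹) ^ n) = (n : ℝ) * φ (a * b * a⁻¹) := hnat _ n
      have h5 : φ (b ^ n) = (n : ℝ) * φ b := hnat _ n
      rw [h1, mul_assoc] at h4
      have := hinv a
      rw [abs_sub_le_iff] at h2 h3
      have habs : (n : ℝ) * |φ (a * b * a⁻¹) - φ b| = |(n:ℝ) * φ (a * b * a⁻¹) - (n:ℝ) * φ b| := by
        rw [← mul_sub, abs_mul, Nat.abs_cast]
      rw [habs, abs_sub_le_iff]
      constructor <;> nlinarith [h2.1, h2.2, h3.1, h3.2]
    by_contra hne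
    have habs : 0 < |φ (a * b * a⁻¹) - φ b| := by
      rcases lt_or_gt_of_ne (sub_ne_zero_of_ne hne) with h | h
      · exact abs_pos.mpr (ne_of_lt h)
      · exact abs_pos.mpr (ne_of_gt h)
    obtain ⟨n, hn⟩ := exists_nat_gt ((2 * D) / |φ (a * b * a⁻¹) - φ b|)
    have := key n
    rw [div_lt_iff₀ habs] at hn
    linarith
  -- bound on a single commutator
  have hcomm : ∀ a b : G, φ ⁅a, b⁆ ≤ D := by
    intro a b
    have hc : ⁅a, b⁆ = (a * b * a⁻¹) * b⁻¹ := by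
      rw [commutatorElement_def]
    have h2 := hqd (a * b * a⁻¹) b⁻¹
    rw [abs_sub_le_iff] at h2
    have := hconj a b
    have := hinv b
    rw [hc]
    linarith [h2.1, h2.2]
  -- bound on products of commutators
  have hprod : ∀ l : List (G × G), φ (l.map fun p => ⁅p.1, p.2⁆).prod ≤ 2 * l.length * D := by
    intro l
    induction l with
    | nil => simpa using hφ1.le
    | cons p l ih =>
      simp only [List.map_cons, List.prod_cons, List.length_cons]
      have h2 := hqd ⁅p.1, p.2⁆ (l.map fun p => ⁅p.1, p.2⁆).prod
      rw [abs_sub_le_iff] at h2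
      have := hcomm p.1 p.2
      push_cast
      linarith [h2.1, h2.2]
  -- g is a product of commutators
  rw [commutator_eq_closure] at hg
  have hrep : ∃ l : List (G × G), g = (l.map fun p => ⁅p.1, p.2⁆).prod := by
    induction hg using Subgroup.closure_induction with
    | mem x hx =>
      obtain ⟨a, b, rfl⟩ := hx
      exact ⟨[(a, b)], by simp⟩
    | one => exact ⟨[], by simp⟩
    | mul x y _ _ hx hy =>
      obtain ⟨lx, rfl⟩ := hx
      obtain ⟨ly, rfl⟩ := hy
      exact ⟨lx ++ ly, by simp⟩
    | inv x _ hx =>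
      obtain ⟨lx, rfl⟩ := hx
      exact ⟨(lx.reverse.map fun p => (p.2, p.1)), inv_rep lx⟩
  obtain ⟨l0, hl0⟩ := hrep
  set k0 := l0.length with hk0
  -- the cl sets are nonempty, with explicit witnesses for powers
  have hset : ∀ x : G, {k : ℕ | ∃ f h : Fin k → G, x = (List.ofFn (fun i => ⁅f i, h i⁆)).prod}
      = {k : ℕ | ∃ l : List (G × G), l.length = k ∧ x = (l.map fun p => ⁅p.1, p.2⁆).prod} :=
    fun x => cl_set_eq x
  have hpow : ∀ n : ℕ, ∃ l : List (G × G), l.length = n * k0 ∧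
      g ^ n = (l.map fun p => ⁅p.1, p.2⁆).prod := by
    intro n
    induction n with
    | zero => exact ⟨[], by simp⟩
    | succ n ih =>
      obtain ⟨l, hlen, hl⟩ := ih
      exact ⟨l ++ l0, by simp [hlen, Nat.succ_mul, hk0], by rw [pow_succ, hl, hl0]; simp⟩
  -- cl (g^n) bound and defect bound
  have hclmem : ∀ n : ℕ, ∃ l : List (G × G), l.length = cl (g ^ n) ∧
      g ^ n = (l.map fun p => ⁅p.1, p.2⁆).prod := by
    intro n
    have hne : {k : ℕ | ∃ l : List (G × G), l.length = k ∧
        g ^ n = (l.map fun p => ⁅p.1, p.2⁆).prod}.Nonempty := by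
      obtain ⟨l, hlen, hl⟩ := hpow n
      exact ⟨n * k0, l, hlen, hl⟩
    have : cl (g ^ n) ∈ {k : ℕ | ∃ l : List (G × G), l.length = k ∧
        g ^ n = (l.map fun p => ⁅p.1, p.2⁆).prod} := by
      rw [cl, hset (g ^ n)]
      exact Nat.sInf_mem hne
    exact this
  have hclle : ∀ n : ℕ, cl (g ^ n) ≤ n * k0 := by
    intro n
    rw [cl, hset (g ^ n)]
    obtain ⟨l, hlen, hl⟩ := hpow n
    exact Nat.sInf_le ⟨l, hlen, hl⟩
  have hkey : ∀ n : ℕ, (n : ℝ) * φ g ≤ 2 * (cl (g ^ n) : ℝ) * D := by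
    intro n
    obtain ⟨l, hlen, hl⟩ := hclmem n
    have := hprod l
    rw [← hl, hnat g n, hlen] at this
    exact this
  -- boundedness of the sequence
  have hbdd : IsBoundedUnder (· ≤ ·) atTop (fun n : ℕ => (cl (g ^ n) : ℝ) / n) := by
    refine isBoundedUnder_of ⟨(k0 : ℝ), fun n => ?_⟩
    rcases Nat.eq_zero_or_pos n with rfl | hn
    · simp
    · rw [div_le_iff₀ (by positivity)]
      calc (cl (g ^ n) : ℝ) ≤ (n * k0 : ℕ) := by exact_mod_cast hclle n
        _ = (k0 : ℝ) * n := by push_cast; ring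
  -- conclude
  rw [scl]
  refine le_limsup_of_frequently_le ((eventually_atTop.mpr ⟨1, fun n hn => ?_⟩).frequently) hbdd
  rcases eq_or_lt_of_le hD0 with hD0' | hD0'
  · rw [← hD0', mul_zero, div_zero]
    positivity
  · rw [div_le_div_iff₀ (by positivity) (by exact_mod_cast hn)]
    have := hkey n
    nlinarith [this]
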